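/- Let X be a real Banach space and let T : [0,∞) → L(X) (bounded linear operators on X) satisfy: T(0) = I; T(t+s) = T(t)T(s) for all s, t ≥ 0; ‖T(t)‖ ≤ 1 for all t ≥ 0; and for every f ∈ X the map t ↦ T(t)f is continuous [0,∞) → X. Let λ > 0 and γ ∈ (0,1), and for f ∈ X define S_γ f = Γ(γ)^{-1} ∫₀^∞ s^{γ-1} e^{-λs} T(s) f ds (a convergent Bochner integral, since the integrand is continuous with norm ≤ s^{γ-1} e^{-λs} ‖f‖). Then for every t ≥ 0 and every f ∈ X, ‖(T(t) − I) S_γ f‖ ≤ (2/Γ(γ+1)) t^γ ‖f‖. -/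

import Mathlib

open MeasureTheory Real Set Filter

/-- Lemma C.3, estimate (C.5).  Let `(T(t))_{t≥0}` be a strongly
continuous contraction semigroup on a Banach space `X`, `λ > 0`, `γ ∈ (0,1)`, and
`S_γ f = Γ(γ)⁻¹ ∫₀^∞ s^{γ-1} e^{-λs} T(s) f ds`.  Then
`‖(T(t) − I) S_γ f‖ ≤ (2/Γ(γ+1)) t^γ ‖f‖` for all `t ≥ 0` and `f ∈ X`. -/
theorem stmt15 (X : Type*) [NormedAddCommGroup X] [NormedSpace ℝ X] [CompleteSpace X]
    (T : ℝ → X →L[ℝ] X)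
    (hT0 : T 0 = ContinuousLinearMap.id ℝ X)
    (hTsemi : ∀ s t : ℝ, 0 ≤ s → 0 ≤ t → T (t + s) = (T t).comp (T s))
    (hTcontr : ∀ t : ℝ, 0 ≤ t → ‖T t‖ ≤ 1)
    (hTcont : ∀ f : X, ContinuousOn (fun t => T t f) (Ici 0))
    (lam γ : ℝ) (hlam : 0 < lam) (hγ : γ ∈ Ioo (0 : ℝ) 1)
    (t : ℝ) (ht : 0 ≤ t) (f : X) :
    ‖T t ((Real.Gamma γ)⁻¹ •
          ∫ s in Ioi (0 : ℝ), (s ^ (γ - 1) * Real.exp (-(lam * s))) • T s f) -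
        (Real.Gamma γ)⁻¹ •
          ∫ s in Ioi (0 : ℝ), (s ^ (γ - 1) * Real.exp (-(lam * s))) • T s f‖ ≤
      2 / Real.Gamma (γ + 1) * t ^ γ * ‖f‖ := by
  obtain ⟨hγ0, hγ1⟩ := hγ
  set g : ℝ → ℝ := fun s => s ^ (γ - 1) * Real.exp (-(lam * s)) with hg_def
  have hg_nonneg : ∀ s : ℝ, 0 ≤ s → 0 ≤ g s := fun s hs =>
    mul_nonneg (Real.rpow_nonneg hs _) (Real.exp_nonneg _)
  have hg_meas : Measurable g := by
    fun_prop
  have hg_int : IntegrableOn g (Ioi 0) := by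
    have h := integrableOn_rpow_mul_exp_neg_mul_rpow (p := 1) (s := γ - 1) (b := lam)
      (by linarith) zero_lt_one hlam
    have : (fun x : ℝ => x ^ (γ - 1) * Real.exp (-lam * x ^ (1 : ℝ))) = g := by
      funext x
      simp [hg_def, Real.rpow_one, neg_mul]
    rwa [this] at h
  have hg_anti : ∀ a b : ℝ, 0 < a → a ≤ b → g b ≤ g a := by
    intro a b ha hab
    apply mul_le_mul
    · exact Real.rpow_le_rpow_of_nonpos ha hab (by linarith)
    · exact Real.exp_le_exp.2 (by nlinarith)
    · exact Real.exp_nonneg _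
    · exact Real.rpow_nonneg ha.le _
  -- measurability of vector integrands
  have hTf_meas : AEStronglyMeasurable (fun s => T s f) (volume.restrict (Ioi (0:ℝ))) :=
    ((hTcont f).mono Ioi_subset_Ici_self).aestronglyMeasurable measurableSet_Ioi
  have hF_int : IntegrableOn (fun s => g s • T s f) (Ioi 0) := by
    apply Integrable.mono' (hg_int.mul_const ‖f‖)
      (hg_meas.aestronglyMeasurable.smul hTf_meas)
    filter_upwards [ae_restrict_mem measurableSet_Ioi] with s hs
    show ‖g s • T s f‖ ≤ g s * ‖f‖
    rw [norm_smul, Real.norm_eq_abs, abs_of_nonneg (hg_nonneg s (le_of_lt hs))]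
    have h1 : ‖T s f‖ ≤ ‖f‖ := by
      calc ‖T s f‖ ≤ ‖T s‖ * ‖f‖ := (T s).le_opNorm f
        _ ≤ 1 * ‖f‖ := by
            exact mul_le_mul_of_nonneg_right (hTcontr s (le_of_lt hs)) (norm_nonneg f)
        _ = ‖f‖ := one_mul _
    exact mul_le_mul_of_nonneg_left h1 (hg_nonneg s (le_of_lt hs))
  have h2cont : ContinuousOn (fun s => T (s + t) f) (Ioi (0:ℝ)) := by
    apply (hTcont f).comp (continuous_add_right t).continuousOn
    intro s hs
    simp only [mem_Ici]
    have h0 : (0:ℝ) < s := hs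
    linarith
  have h2F_int : IntegrableOn (fun s => g s • T (s + t) f) (Ioi 0) := by
    apply Integrable.mono' (hg_int.mul_const ‖f‖)
      (hg_meas.aestronglyMeasurable.smul
        (h2cont.aestronglyMeasurable measurableSet_Ioi))
    filter_upwards [ae_restrict_mem measurableSet_Ioi] with s hs
    show ‖g s • T (s + t) f‖ ≤ g s * ‖f‖
    rw [norm_smul, Real.norm_eq_abs, abs_of_nonneg (hg_nonneg s (le_of_lt hs))]
    have hst : (0:ℝ) ≤ s + t := by
      have : (0:ℝ) < s := hs; linarith
    have h1 : ‖T (s + t) f‖ ≤ ‖f‖ := by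
      calc ‖T (s + t) f‖ ≤ ‖T (s + t)‖ * ‖f‖ := (T (s + t)).le_opNorm f
        _ ≤ 1 * ‖f‖ := mul_le_mul_of_nonneg_right (hTcontr _ hst) (norm_nonneg f)
        _ = ‖f‖ := one_mul _
    exact mul_le_mul_of_nonneg_left h1 (hg_nonneg s (le_of_lt hs))
  -- translation machinery
  have hmp : MeasurePreserving (fun x : ℝ => x + t) volume volume :=
    measurePreserving_add_right volume t
  have hemb : MeasurableEmbedding (fun x : ℝ => x + t) :=
    (MeasurableEquiv.addRight t).measurableEmbedding
  have hpre : (fun x : ℝ => x + t) ⁻¹' (Ioi t) = Ioi 0 := by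
    ext x; simp [lt_add_iff_pos_left]
  -- translated integrals
  have htransV : (∫ u in Ioi t, g (u - t) • T u f) = ∫ s in Ioi 0, g s • T (s + t) f := by
    rw [← hmp.setIntegral_preimage_emb hemb (fun u => g (u - t) • T u f) (Ioi t), hpre]
    simp
  have htransInt : IntegrableOn (fun u => g (u - t) • T u f) (Ioi t) := by
    have := (hmp.integrableOn_comp_preimage hemb
      (f := fun u => g (u - t) • T u f) (s := Ioi t))
    rw [hpre] at this
    apply this.1
    have : ((fun u => g (u - t) • T u f) ∘ fun x : ℝ => x + t)
        = fun s => g s • T (s + t) f := by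
      funext s; simp
    rw [this]
    exact h2F_int
  have hg_transV : (∫ u in Ioi t, g (u - t)) = ∫ s in Ioi 0, g s := by
    rw [← hmp.setIntegral_preimage_emb hemb (fun u => g (u - t)) (Ioi t), hpre]
    simp
  have hg_int_Ioit : IntegrableOn (fun u => g (u - t)) (Ioi t) := by
    have := (hmp.integrableOn_comp_preimage hemb
      (f := fun u => g (u - t)) (s := Ioi t))
    rw [hpre] at this
    apply this.1
    have : ((fun u => g (u - t)) ∘ fun x : ℝ => x + t) = g := by funext s; simp
    rw [this]
    exact hg_int
  -- semigroup identity
  have key : T t (∫ s in Ioi (0:ℝ), g s • T s f) = ∫ s in Ioi (0:ℝ), g s • T (s + t) f := by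
    rw [← (T t).integral_comp_comm hF_int]
    apply setIntegral_congr_fun measurableSet_Ioi
    intro s hs
    have hsem := hTsemi s t (le_of_lt hs) ht
    show T t (g s • T s f) = g s • T (s + t) f
    rw [(T t).map_smul, add_comm s t, hsem, ContinuousLinearMap.comp_apply]
  -- splitting the half-line
  have hF_Ioc : IntegrableOn (fun s => g s • T s f) (Ioc 0 t) :=
    hF_int.mono_set Ioc_subset_Ioi_self
  have hF_Ioit : IntegrableOn (fun s => g s • T s f) (Ioi t) :=
    hF_int.mono_set (Ioi_subset_Ioi ht)
  have hg_Ioc : IntegrableOn g (Ioc 0 t) := hg_int.mono_set Ioc_subset_Ioi_self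
  have hg_Ioit : IntegrableOn g (Ioi t) := hg_int.mono_set (Ioi_subset_Ioi ht)
  have hsplit : (∫ s in Ioi (0:ℝ), g s • T s f)
      = (∫ s in Ioc 0 t, g s • T s f) + ∫ s in Ioi t, g s • T s f := by
    rw [← setIntegral_union (Ioc_disjoint_Ioi le_rfl) measurableSet_Ioi hF_Ioc hF_Ioit,
      Ioc_union_Ioi_eq_Ioi ht]
  have hg_split : (∫ s in Ioi (0:ℝ), g s) = (∫ s in Ioc 0 t, g s) + ∫ s in Ioi t, g s := by
    rw [← setIntegral_union (Ioc_disjoint_Ioi le_rfl) measurableSet_Ioi hg_Ioc hg_Ioit,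
      Ioc_union_Ioi_eq_Ioi ht]
  -- the difference identity
  have hdiff : T t (∫ s in Ioi (0:ℝ), g s • T s f) - ∫ s in Ioi (0:ℝ), g s • T s f
      = (∫ u in Ioi t, (g (u - t) - g u) • T u f) - ∫ s in Ioc 0 t, g s • T s f := by
    have heq : (∫ u in Ioi t, (g (u - t) - g u) • T u f)
        = (∫ u in Ioi t, g (u - t) • T u f) - ∫ u in Ioi t, g u • T u f := by
      rw [← integral_sub htransInt hF_Ioit]
      congr 1; funext u; rw [sub_smul]
    rw [key, ← htransV, heq, hsplit]
    abel
  -- bound the first piece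
  have hb1 : ‖∫ u in Ioi t, (g (u - t) - g u) • T u f‖ ≤ (∫ s in Ioc 0 t, g s) * ‖f‖ := by
    have hbint : Integrable (fun u => (g (u - t) - g u) * ‖f‖)
        (volume.restrict (Ioi t)) := (hg_int_Ioit.sub hg_Ioit).mul_const _
    have hae : ∀ᵐ u ∂volume.restrict (Ioi t),
        ‖(g (u - t) - g u) • T u f‖ ≤ (g (u - t) - g u) * ‖f‖ := by
      filter_upwards [ae_restrict_mem measurableSet_Ioi] with u hu
      have htu : t < u := hu
      have hu0 : (0:ℝ) < u := lt_of_le_of_lt ht htu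
      have hmono : g u ≤ g (u - t) := hg_anti (u - t) u (by linarith) (by linarith)
      rw [norm_smul, Real.norm_eq_abs, abs_of_nonneg (by linarith)]
      have h1 : ‖T u f‖ ≤ ‖f‖ := by
        calc ‖T u f‖ ≤ ‖T u‖ * ‖f‖ := (T u).le_opNorm f
          _ ≤ 1 * ‖f‖ := mul_le_mul_of_nonneg_right (hTcontr u hu0.le) (norm_nonneg f)
          _ = ‖f‖ := one_mul _
      exact mul_le_mul_of_nonneg_left h1 (by linarith)
    calc ‖∫ u in Ioi t, (g (u - t) - g u) • T u f‖
        ≤ ∫ u in Ioi t, (g (u - t) - g u) * ‖f‖ := norm_integral_le_of_norm_le hbint hae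
      _ = (∫ u in Ioi t, (g (u - t) - g u)) * ‖f‖ := by
          rw [integral_mul_const]
      _ = (∫ s in Ioc 0 t, g s) * ‖f‖ := by
          rw [integral_sub hg_int_Ioit hg_Ioit, hg_transV, hg_split]
          ring
  -- bound the second piece
  have hb2 : ‖∫ s in Ioc 0 t, g s • T s f‖ ≤ (∫ s in Ioc 0 t, g s) * ‖f‖ := by
    have hbint : Integrable (fun s => g s * ‖f‖) (volume.restrict (Ioc 0 t)) :=
      hg_Ioc.mul_const _
    have hae : ∀ᵐ s ∂volume.restrict (Ioc 0 t),
        ‖g s • T s f‖ ≤ g s * ‖f‖ := by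
      filter_upwards [ae_restrict_mem measurableSet_Ioc] with s hs
      have hs0 : (0:ℝ) < s := hs.1
      rw [norm_smul, Real.norm_eq_abs, abs_of_nonneg (hg_nonneg s hs0.le)]
      have h1 : ‖T s f‖ ≤ ‖f‖ := by
        calc ‖T s f‖ ≤ ‖T s‖ * ‖f‖ := (T s).le_opNorm f
          _ ≤ 1 * ‖f‖ := mul_le_mul_of_nonneg_right (hTcontr s hs0.le) (norm_nonneg f)
          _ = ‖f‖ := one_mul _
      exact mul_le_mul_of_nonneg_left h1 (hg_nonneg s hs0.le)
    calc ‖∫ s in Ioc 0 t, g s • T s f‖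
        ≤ ∫ s in Ioc 0 t, g s * ‖f‖ := norm_integral_le_of_norm_le hbint hae
      _ = (∫ s in Ioc 0 t, g s) * ‖f‖ := by rw [integral_mul_const]
  -- the key scalar estimate
  have hIoc : (∫ s in Ioc 0 t, g s) ≤ t ^ γ / γ := by
    have hrint : IntegrableOn (fun s : ℝ => s ^ (γ - 1)) (Ioc 0 t) := by
      have := intervalIntegral.intervalIntegrable_rpow' (a := 0) (b := t) (r := γ - 1) (by linarith)
      rwa [intervalIntegrable_iff_integrableOn_Ioc_of_le ht] at this
    have h1 : (∫ s in Ioc 0 t, g s) ≤ ∫ s in Ioc 0 t, s ^ (γ - 1) := by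
      apply setIntegral_mono_on hg_Ioc hrint measurableSet_Ioc
      intro s hs
      have hs0 : (0:ℝ) < s := hs.1
      calc g s = s ^ (γ - 1) * Real.exp (-(lam * s)) := rfl
        _ ≤ s ^ (γ - 1) * 1 := by
            apply mul_le_mul_of_nonneg_left _ (Real.rpow_nonneg hs0.le _)
            rw [Real.exp_le_one_iff]
            nlinarith
        _ = s ^ (γ - 1) := mul_one _
    have h2 : (∫ s in Ioc 0 t, s ^ (γ - 1)) = t ^ γ / γ := by
      rw [← intervalIntegral.integral_of_le ht,
        _root_.integral_rpow (Or.inl (by linarith : (-1:ℝ) < γ - 1)),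
        sub_add_cancel, Real.zero_rpow (ne_of_gt hγ0)]
      ring
    rw [← h2]; exact h1
  -- combine
  have hIocnn : (0:ℝ) ≤ ∫ s in Ioc 0 t, g s :=
    setIntegral_nonneg measurableSet_Ioc (fun s hs => hg_nonneg s hs.1.le)
  have hmain : ‖T t (∫ s in Ioi (0:ℝ), g s • T s f) - ∫ s in Ioi (0:ℝ), g s • T s f‖
      ≤ 2 * (t ^ γ / γ) * ‖f‖ := by
    rw [hdiff]
    calc ‖(∫ u in Ioi t, (g (u - t) - g u) • T u f) - ∫ s in Ioc 0 t, g s • T s f‖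
        ≤ ‖∫ u in Ioi t, (g (u - t) - g u) • T u f‖ + ‖∫ s in Ioc 0 t, g s • T s f‖ :=
          norm_sub_le _ _
      _ ≤ (∫ s in Ioc 0 t, g s) * ‖f‖ + (∫ s in Ioc 0 t, g s) * ‖f‖ := add_le_add hb1 hb2
      _ = 2 * (∫ s in Ioc 0 t, g s) * ‖f‖ := by ring
      _ ≤ 2 * (t ^ γ / γ) * ‖f‖ := by
          apply mul_le_mul_of_nonneg_right _ (norm_nonneg f)
          linarith
  -- final arithmetic with the Gamma function
  have hΓpos : 0 < Real.Gamma γ := Real.Gamma_pos_of_pos hγ0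
  have hΓ1 : Real.Gamma (γ + 1) = γ * Real.Gamma γ := by
    rw [Real.Gamma_add_one (ne_of_gt hγ0)]
  have hgoal : (∫ s in Ioi (0:ℝ), (s ^ (γ - 1) * Real.exp (-(lam * s))) • T s f)
      = ∫ s in Ioi (0:ℝ), g s • T s f := rfl
  rw [hgoal, (T t).map_smul, ← smul_sub, norm_smul, Real.norm_eq_abs,
    abs_of_nonneg (inv_nonneg.2 hΓpos.le)]
  calc (Real.Gamma γ)⁻¹ * ‖T t (∫ s in Ioi (0:ℝ), g s • T s f)
        - ∫ s in Ioi (0:ℝ), g s • T s f‖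
      ≤ (Real.Gamma γ)⁻¹ * (2 * (t ^ γ / γ) * ‖f‖) :=
        mul_le_mul_of_nonneg_left hmain (inv_nonneg.2 hΓpos.le)
    _ = 2 / Real.Gamma (γ + 1) * t ^ γ * ‖f‖ := by
        simp only [hΓ1, div_eq_mul_inv, mul_inv]
        ring
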